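/- The set 𝒮' = { (k,k̂) ∈ L² : 1, k, φ(k,k̂) are linearly independent over 𝔽_q and k̂ ∉ {k^[1], k^[2]} } has cardinality |𝒮'| = (q³−q)(q³−q²−q−2). In particular, 𝒮' is empty if and only if q = 2. -/

import Mathlib

open Matrix Polynomial

/-- A `[3×3;3]`-MRD code: a 3-dimensional `F`-subspace of the `3×3` matrices over `F`
in which every nonzero matrix is invertible. -/
def IsMRD (F : Type*) [Field F] [Fintype F]
    (Cc : Submodule F (Matrix (Fin 3) (Fin 3) F)) : Prop :=
  Module.finrank F Cc = 3 ∧ ∀ M ∈ Cc, M ≠ 0 → IsUnit M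

/-- The companion matrix `C_f` of `f = x³ - c·x² - b·x - a`, with rows
`(0,0,a)`, `(1,0,b)`, `(0,1,c)`. -/
def cMat (F : Type*) [Field F] (a b c : F) : Matrix (Fin 3) (Fin 3) F :=
  !![0, 0, a; 1, 0, b; 0, 1, c]

/-- The monic cubic `x³ - c·x² - b·x - a`. -/
noncomputable def cubic (F : Type*) [Field F] (a b c : F) : Polynomial F :=
  X ^ 3 - C c * X ^ 2 - C b * X - C a

/-- The set `𝒮` of triples `(I, C_f, Z)` with `f` a monic irreducible cubic,
`Z` having first column `(0,0,1)ᵀ`, and the span of `{I, C_f, Z}` a `[3×3;3]`-MRD code. -/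
def mrdS (F : Type*) [Field F] [Fintype F] :
    Set (Matrix (Fin 3) (Fin 3) F × Matrix (Fin 3) (Fin 3) F × Matrix (Fin 3) (Fin 3) F) :=
  {t | t.1 = 1 ∧
       (∃ a b c : F, Irreducible (cubic F a b c) ∧ t.2.1 = cMat F a b c) ∧
       t.2.2 0 0 = 0 ∧ t.2.2 1 0 = 0 ∧ t.2.2 2 0 = 1 ∧
       IsMRD F (Submodule.span F {t.1, t.2.1, t.2.2})}

/-- `T_q`: all 3-dimensional subspaces of `F^{3×3}`. -/
def Tset (F : Type*) [Field F] [Fintype F] : Set (Submodule F (Matrix (Fin 3) (Fin 3) F)) :=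
  {Cc | Module.finrank F Cc = 3}

/-- `T̂_q`: all `[3×3;3]`-MRD codes. -/
def ThatSet (F : Type*) [Field F] [Fintype F] : Set (Submodule F (Matrix (Fin 3) (Fin 3) F)) :=
  {Cc | IsMRD F Cc}

/-- `k ↦ k^{q^i}`, the `i`-th Frobenius power (with `q = |F|`), written `k^[i]`. -/
def frk (F : Type*) [Fintype F] (L : Type*) [Field L] (i : ℕ) (k : L) : L :=
  k ^ (Fintype.card F ^ i)

/-- `σ₁(k) = k + k^[1] + k^[2]`. -/
def sig1 (F : Type*) [Fintype F] (L : Type*) [Field L] (k : L) : L :=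
  k + frk F L 1 k + frk F L 2 k

/-- `σ₂(k) = k·k^[1] + k·k^[2] + k^[1]·k^[2]`. -/
def sig2 (F : Type*) [Fintype F] (L : Type*) [Field L] (k : L) : L :=
  k * frk F L 1 k + k * frk F L 2 k + frk F L 1 k * frk F L 2 k

/-- `σ₃(k) = k·k^[1]·k^[2]`. -/
def sig3 (F : Type*) [Fintype F] (L : Type*) [Field L] (k : L) : L :=
  k * frk F L 1 k * frk F L 2 k

/-- `φ(k,k̂) = (k+k̂)(σ₁(k̂)−k̂) − σ₂(k̂)`. -/
def phiM (F : Type*) [Fintype F] (L : Type*) [Field L] (k khat : L) : L :=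
  (k + khat) * (sig1 F L khat - khat) - sig2 F L khat

/-- `Σ₁(k,k̂)`, with rows `(0,0,σ₃(k))`, `(1,0,−σ₂(k))`, `(0,1,σ₁(k))`. -/
def Sig1 (F : Type*) [Fintype F] (L : Type*) [Field L] (k khat : L) :
    Matrix (Fin 3) (Fin 3) L :=
  !![0, 0, sig3 F L k; 1, 0, -(sig2 F L k); 0, 1, sig1 F L k]

/-- `Σ₂(k,k̂)`. -/
def Sig2 (F : Type*) [Fintype F] (L : Type*) [Field L] (k khat : L) :
    Matrix (Fin 3) (Fin 3) L :=
  !![0, sig3 F L khat,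
       sig1 F L k * sig3 F L khat + sig1 F L khat * sig3 F L k - sig2 F L (k * khat);
     0, -(sig2 F L khat), -(sig3 F L (k + khat));
     1, sig1 F L khat, sig1 F L k * sig1 F L khat - sig1 F L (k * khat)]

/-- `𝒮'`: pairs `(k,k̂)` with `1, k, φ(k,k̂)` linearly independent over `F` and
`k̂ ∉ {k^[1], k^[2]}`. -/
def Sprime (F : Type*) [Field F] [Fintype F] (L : Type*) [Field L] [Algebra F L] :
    Set (L × L) :=
  {p | LinearIndependent F ![(1 : L), p.1, phiM F L p.1 p.2] ∧
       p.2 ≠ frk F L 1 p.1 ∧ p.2 ≠ frk F L 2 p.1}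

/-- Fixed points of `x ↦ x^q` in `L` are exactly the image of `F`. -/
lemma fixed_mem_range (F : Type*) [Field F] [Fintype F] (L : Type*) [Field L] [Algebra F L]
    (x : L) (h : x ^ Fintype.card F = x) : ∃ y : F, algebraMap F L y = x := by
  classical
  set q := Fintype.card F with hq
  have hq2 : 1 < q := Fintype.one_lt_card
  have hPdeg : (X ^ q - X : L[X]).natDegree = q := by
    have : (X : L[X]).degree < (X ^ q : L[X]).degree := by
      rw [degree_X, degree_X_pow]
      exact_mod_cast hq2
    rw [natDegree_sub_eq_left_of_natDegree_lt]
    · exact natDegree_X_pow q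
    · rw [natDegree_X_pow, natDegree_X]; omega
  have hPne : (X ^ q - X : L[X]) ≠ 0 := by
    intro h0
    rw [h0] at hPdeg
    simp at hPdeg
    omega
  set T : Finset L := Finset.univ.image (algebraMap F L) with hT
  have hTcard : T.card = q := by
    rw [hT, Finset.card_image_of_injective _ (algebraMap F L).injective, Finset.card_univ]
  have hsub : T ⊆ (X ^ q - X : L[X]).roots.toFinset := by
    intro z hz
    rw [hT, Finset.mem_image] at hz
    obtain ⟨y, -, rfl⟩ := hz
    rw [Multiset.mem_toFinset, mem_roots hPne]
    simp only [IsRoot, eval_sub, eval_pow, eval_X]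
    rw [← map_pow, FiniteField.pow_card, sub_self]
  have hle : (X ^ q - X : L[X]).roots.toFinset.card ≤ q := by
    calc (X ^ q - X : L[X]).roots.toFinset.card ≤ Multiset.card (X ^ q - X : L[X]).roots :=
          Multiset.toFinset_card_le _
      _ ≤ (X ^ q - X : L[X]).natDegree := card_roots' _
      _ = q := hPdeg
  have hTeq : T = (X ^ q - X : L[X]).roots.toFinset :=
    Finset.eq_of_subset_of_card_le hsub (by omega)
  have hx : x ∈ T := by
    rw [hTeq, Multiset.mem_toFinset, mem_roots hPne]
    simp only [IsRoot, eval_sub, eval_pow, eval_X]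
    rw [h, sub_self]
  rw [hT, Finset.mem_image] at hx
  obtain ⟨y, -, hy⟩ := hx
  exact ⟨y, hy⟩
open Polynomial IntermediateField

lemma exists_frob (F : Type*) [Field F] [Fintype F] (L : Type*) [Field L] [Algebra F L] :
    ∃ f : L →+* L, ∀ x : L, f x = x ^ Fintype.card F := by
  set p := ringChar F with hp
  haveI : CharP F p := ringChar.charP F
  haveI : Fact p.Prime := ⟨CharP.char_is_prime F p⟩
  obtain ⟨n, hcard⟩ := FiniteField.card F p
  haveI : CharP L p := charP_of_injective_algebraMap (algebraMap F L).injective p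
  refine ⟨iterateFrobenius L p n, fun x => ?_⟩
  rw [iterateFrobenius_def, ← hcard.2]

lemma indep_powers (F : Type*) [Field F] [Fintype F] (L : Type*) [Field L] [Algebra F L]
    (hL : Module.finrank F L = 3) (k : L) (hk : ¬∃ y : F, algebraMap F L y = k) :
    LinearIndependent F ![(1 : L), k, k ^ 2] := by
  classical
  haveI : Module.Finite F L := Module.finite_of_finrank_pos (by rw [hL]; norm_num)
  have hint : IsIntegral F k := IsIntegral.of_finite F k
  have hdeg : (minpoly F k).natDegree = 3 := by
    have h1 : Module.finrank F F⟮k⟯ = (minpoly F k).natDegree :=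
      IntermediateField.adjoin.finrank hint
    have h2 : Module.finrank F F⟮k⟯ * Module.finrank F⟮k⟯ L = 3 := by
      rw [Module.finrank_mul_finrank, hL]
    have hdvd : (minpoly F k).natDegree ∣ 3 := ⟨_, by rw [← h1, h2.symm]⟩
    have h3 : (minpoly F k).natDegree ≠ 1 := by
      intro h
      exact hk (by simpa [RingHom.mem_range] using (minpoly.natDegree_eq_one_iff).mp h)
    rcases (Nat.Prime.eq_one_or_self_of_dvd (by norm_num) _ hdvd) with h | h
    · exact absurd h h3
    · exact h
  rw [Fintype.linearIndependent_iff]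
  intro g hg
  set P : F[X] := C (g 0) + C (g 1) * X + C (g 2) * X ^ 2 with hP
  have hev : aeval k P = 0 := by
    rw [hP]
    simp only [_root_.map_add, _root_.map_mul, aeval_C, aeval_X, _root_.map_pow]
    rw [Fin.sum_univ_three] at hg
    simpa [Algebra.smul_def, Matrix.cons_val_zero, Matrix.cons_val_one] using hg
  have hP0 : P = 0 := by
    by_contra hne
    have hle : (minpoly F k).degree ≤ P.degree := minpoly.degree_le_of_ne_zero F k hne hev
    have hPdeg : P.degree ≤ 2 := by
      rw [hP, show C (g 0) + C (g 1) * X + C (g 2) * X ^ 2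
          = C (g 2) * X ^ 2 + C (g 1) * X + C (g 0) from by ring]
      exact degree_quadratic_le
    have hmd : (minpoly F k).degree = 3 := by
      rw [degree_eq_natDegree (minpoly.ne_zero hint), hdeg]; rfl
    rw [hmd] at hle
    have := le_trans hle hPdeg
    norm_num at this
  have c0 : g 0 = 0 := by have := congrArg (fun Q => Polynomial.coeff Q 0) hP0; simpa [hP] using this
  have c1 : g 1 = 0 := by have := congrArg (fun Q => Polynomial.coeff Q 1) hP0; simpa [hP] using this
  have c2 : g 2 = 0 := by have := congrArg (fun Q => Polynomial.coeff Q 2) hP0; simpa [hP] using this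
  intro i
  fin_cases i <;> assumption
lemma key_count (F : Type*) [Field F] [Fintype F] (L : Type*) [Field L] [Algebra F L]
    [Fintype L] (hL : Module.finrank F L = 3) (k : L)
    [DecidablePred fun m : L => (k, m) ∈ Sprime F L]
    (hk : ¬∃ y : F, algebraMap F L y = k) :
    (Finset.univ.filter fun m : L => (k, m) ∈ Sprime F L).card
      = Fintype.card F ^ 3 - (Fintype.card F ^ 2 + Fintype.card F) - 2 := by
  classical
  have hcardL : Fintype.card L = Fintype.card F ^ 3 := by
    rw [Module.card_eq_pow_finrank (K := F) (V := L), hL]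
  obtain ⟨f, hf⟩ := exists_frob F L
  have hfrk1 : ∀ x : L, frk F L 1 x = f x := by
    intro x; rw [hf, frk, pow_one]
  have hfrk2 : ∀ x : L, frk F L 2 x = f (f x) := by
    intro x; rw [hf, hf, frk, ← pow_mul, pow_two]
  have hf3 : ∀ x : L, f (f (f x)) = x := by
    intro x
    rw [hf, hf, hf, ← pow_mul, ← pow_mul]
    have h3 : ∀ e : ℕ, e = Fintype.card L → x ^ e = x := by
      rintro e rfl; exact FiniteField.pow_card x
    apply h3
    rw [hcardL]; ring
  have hfa : ∀ y : F, f (algebraMap F L y) = algebraMap F L y := by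
    intro y; rw [hf, ← map_pow, FiniteField.pow_card]
  have hrange : ∀ x : L, f x = x → ∃ y : F, algebraMap F L y = x := by
    intro x hx; exact fixed_mem_range F L x (by rw [← hf, hx])
  have finj : Function.Injective f := f.injective
  -- basis
  have hk1 : LinearIndependent F ![(1 : L), k, k ^ 2] := indep_powers F L hL k hk
  have hcard3 : Fintype.card (Fin 3) = Module.finrank F L := by rw [hL]; simp
  set b : Module.Basis (Fin 3) F L := basisOfLinearIndependentOfCardEqFinrank hk1 hcard3 with hbdef
  have hb : ⇑b = ![(1 : L), k, k ^ 2] := coe_basisOfLinearIndependentOfCardEqFinrank hk1 hcard3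
  set l : L →ₗ[F] F := b.coord 2 with hldef
  have hb0 : b 0 = 1 := by rw [hb]; rfl
  have hb1 : b 1 = k := by rw [hb]; rfl
  have hb2 : b 2 = k ^ 2 := by rw [hb]; rfl
  have hcoord : ∀ (i j : Fin 3), b.coord i (b j) = if j = i then 1 else 0 := by
    intro i j; rw [Module.Basis.coord_apply, Module.Basis.repr_self, Finsupp.single_apply]
  have hl1 : l (1 : L) = 0 := by rw [hldef, ← hb0, hcoord, if_neg (by decide)]
  have hlk : l k = 0 := by rw [hldef, ← hb1, hcoord, if_neg (by decide)]
  have hlk2 : l (k ^ 2) = 1 := by rw [hldef, ← hb2, hcoord, if_pos rfl]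
  have hlr : ∀ y : F, l (algebraMap F L y) = 0 := by
    intro y
    rw [Algebra.algebraMap_eq_smul_one, LinearMap.map_smul, hl1, smul_zero]
  have hlsm : ∀ (y : F) (v : L), l (algebraMap F L y * v) = y * l v := by
    intro y v; rw [← Algebra.smul_def, LinearMap.map_smul, smul_eq_mul]
  -- phi normal form
  have hphi : ∀ m : L, phiM F L k m = k * (f m + f (f m)) - f m * f (f m) := by
    intro m
    simp only [phiM, sig1, sig2, hfrk1, hfrk2]
    ring
  have hsig : ∀ m : L, ∃ s : F, f m + f (f m) = algebraMap F L s - m := by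
    intro m
    obtain ⟨s, hs⟩ := hrange (m + f m + f (f m))
      (by rw [_root_.map_add, _root_.map_add, hf3]; ring)
    exact ⟨s, by rw [hs]; ring⟩
  -- shift identity
  have lem1 : ∀ (m : L) (x : F),
      l (phiM F L k (m + algebraMap F L x)) = l (phiM F L k m) + x * l m := by
    intro m x
    obtain ⟨s, hs⟩ := hsig m
    have e1 : phiM F L k (m + algebraMap F L x)
        = phiM F L k m + ((algebraMap F L x * k + algebraMap F L x * k)
          - (algebraMap F L (x * s) - algebraMap F L x * m) - algebraMap F L (x * x)) := by
      rw [hphi, hphi]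
      simp only [_root_.map_add, _root_.map_mul, hfa]
      linear_combination (-(algebraMap F L x)) * hs
    rw [e1]
    simp only [_root_.map_add, map_sub, hlsm, hlr, hlk]
    ring
  -- values
  obtain ⟨s2, hs2⟩ : ∃ s2 : F, algebraMap F L s2 = k * f k + k * f (f k) + f k * f (f k) := by
    apply hrange
    rw [_root_.map_add, _root_.map_add, _root_.map_mul, _root_.map_mul, _root_.map_mul, hf3]
    ring
  have hA : l (k * f k + k * f (f k)) = -1 := by
    obtain ⟨s1, hs1⟩ := hsig k
    have e : k * f k + k * f (f k) = algebraMap F L s1 * k - k ^ 2 := by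
      linear_combination k * hs1
    rw [e, map_sub, hlsm, hlk, hlk2]; ring
  have hB : l (f k * f (f k)) = 1 := by
    have e : f k * f (f k) = algebraMap F L s2 - (k * f k + k * f (f k)) := by
      linear_combination -hs2
    rw [e, map_sub, hlr, hA]; ring
  have lem2 : ∀ y : F, l (phiM F L k (algebraMap F L y * k)) = -(y + y * y) := by
    intro y
    have e : phiM F L k (algebraMap F L y * k)
        = algebraMap F L y * (k * f k + k * f (f k)) - algebraMap F L (y * y) * (f k * f (f k)) := by
      rw [hphi]
      simp only [_root_.map_mul, hfa]
      ring
    rw [e, map_sub, hlsm, hlsm, hA, hB]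
    ring
  have hvA : phiM F L k (f k) = k ^ 2 := by rw [hphi, hf3]; ring
  have hvB : phiM F L k (f (f k)) = k ^ 2 := by rw [hphi, hf3]; ring
  have hAB : f k ≠ f (f k) := by
    intro h
    exact hk (hrange k (finj h).symm)
  -- criterion
  have hcrit : ∀ m : L, ((k, m) ∈ Sprime F L) ↔
      (l (phiM F L k m) ≠ 0 ∧ m ≠ f k ∧ m ≠ f (f k)) := by
    intro m
    have hiff : LinearIndependent F ![(1 : L), k, phiM F L k m] ↔ l (phiM F L k m) ≠ 0 := by
      constructor
      · intro hind hl0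
        have hrepr := b.sum_repr (phiM F L k m)
        rw [Fin.sum_univ_three, hb0, hb1, hb2] at hrepr
        have h2 : b.repr (phiM F L k m) 2 = 0 := hl0
        rw [h2, zero_smul, add_zero] at hrepr
        rw [Fintype.linearIndependent_iff] at hind
        have h3 := hind ![b.repr (phiM F L k m) 0, b.repr (phiM F L k m) 1, -1] ?_ 2
        · change (-1 : F) = 0 at h3
          norm_num at h3
        · rw [Fin.sum_univ_three]
          simp only [Matrix.cons_val_zero, Matrix.cons_val_one, Matrix.head_cons,
            Matrix.cons_val_two, Matrix.tail_cons]
          rw [hrepr]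
          simp
      · intro hl0
        rw [Fintype.linearIndependent_iff]
        intro g hg
        rw [Fin.sum_univ_three] at hg
        simp only [Matrix.cons_val_zero, Matrix.cons_val_one, Matrix.head_cons,
          Matrix.cons_val_two, Matrix.tail_cons] at hg
        have hg2 : g 2 = 0 := by
          have h4 := congrArg l hg
          simp only [_root_.map_add, LinearMap.map_smul, hl1, hlk, smul_eq_mul, _root_.map_zero,
            mul_zero, zero_add, add_zero] at h4
          rcases mul_eq_zero.mp h4 with h | h
          · exact h
          · exact absurd h hl0
        rw [hg2, zero_smul, add_zero] at hg
        rw [← hb0, ← hb1] at hg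
        have hg0 : g 0 = 0 := by
          have h4 := congrArg (b.coord 0) hg
          simp only [_root_.map_add, LinearMap.map_smul, smul_eq_mul, _root_.map_zero,
            hcoord] at h4
          simpa using h4
        have hg1 : g 1 = 0 := by
          have h4 := congrArg (b.coord 1) hg
          simp only [_root_.map_add, LinearMap.map_smul, smul_eq_mul, _root_.map_zero,
            hcoord] at h4
          simpa using h4
        intro i
        fin_cases i <;> assumption
    simp only [Sprime, Set.mem_setOf_eq, hfrk1, hfrk2]
    rw [hiff]
  -- the coordinate bijection
  set E : F × F × F → L := fun v =>
    (algebraMap F L v.2.1 * k + algebraMap F L v.2.2 * k ^ 2) + algebraMap F L v.1 with hE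
  have hEinj : Function.Injective E := by
    intro v w hvw
    have hk1' := hk1
    rw [Fintype.linearIndependent_iff] at hk1'
    have h0 := hk1' ![v.1 - w.1, v.2.1 - w.2.1, v.2.2 - w.2.2] ?_
    · have e0 := h0 0; have e1 := h0 1; have e2 := h0 2
      simp only [Matrix.cons_val_zero, Matrix.cons_val_one, Matrix.head_cons,
        Matrix.cons_val_two, Matrix.tail_cons] at e0 e1 e2
      have q0 : v.1 = w.1 := sub_eq_zero.mp e0
      have q1 : v.2.1 = w.2.1 := sub_eq_zero.mp e1
      have q2 : v.2.2 = w.2.2 := sub_eq_zero.mp e2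
      exact Prod.ext q0 (Prod.ext q1 q2)
    · rw [Fin.sum_univ_three]
      simp only [Matrix.cons_val_zero, Matrix.cons_val_one, Matrix.head_cons,
        Matrix.cons_val_two, Matrix.tail_cons]
      have hsub : E v - E w = 0 := sub_eq_zero.mpr hvw
      rw [hE] at hsub
      simp only [Algebra.smul_def, _root_.map_sub] at *
      rw [mul_one]
      linear_combination hsub
  have hEbij : Function.Bijective E := by
    rw [Fintype.bijective_iff_injective_and_card]
    refine ⟨hEinj, ?_⟩
    simp only [Fintype.card_prod, hcardL]
    ring
  have hEl : ∀ v : F × F × F, l (phiM F L k (E v))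
      = l (phiM F L k (algebraMap F L v.2.1 * k + algebraMap F L v.2.2 * k ^ 2))
        + v.1 * v.2.2 := by
    intro v
    rw [hE]
    rw [lem1]
    congr 1
    rw [_root_.map_add, hlsm, hlsm, hlk, hlk2]
    ring
  set G : F → F → F := fun y z =>
    l (phiM F L k (algebraMap F L y * k + algebraMap F L z * k ^ 2)) with hG
  have hG0 : ∀ y : F, G y 0 = -(y + y * y) := by
    intro y
    rw [hG]
    simp only [_root_.map_zero, zero_mul, add_zero]
    exact lem2 y
  -- inner 1-variable counts
  have hinner : ∀ w : F × F, (Finset.univ.filter fun x : F => G w.1 w.2 + x * w.2 = 0).card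
      = if w.2 = 0 then (if w.1 = 0 ∨ w.1 = -1 then Fintype.card F else 0) else 1 := by
    intro w
    by_cases hz : w.2 = 0
    · rw [if_pos hz]
      by_cases hy : w.1 = 0 ∨ w.1 = -1
      · rw [if_pos hy]
        have hall : ∀ x : F, G w.1 w.2 + x * w.2 = 0 := by
          intro x
          rw [hz, mul_zero, add_zero, hG0]
          rcases hy with h | h <;> rw [h] <;> ring
        rw [Finset.filter_true_of_mem (fun x _ => hall x), Finset.card_univ]
      · rw [if_neg hy]
        rw [Finset.card_eq_zero, Finset.filter_eq_empty_iff]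
        intro x _
        rw [hz, mul_zero, add_zero, hG0]
        intro h0
        apply hy
        have hfac : w.1 * (1 + w.1) = 0 := by linear_combination -h0
        rcases mul_eq_zero.mp hfac with h | h
        · exact Or.inl h
        · exact Or.inr (by linear_combination h)
    · rw [if_neg hz]
      have hiff : ∀ x : F, (G w.1 w.2 + x * w.2 = 0) ↔ x = -G w.1 w.2 * w.2⁻¹ := by
        intro x
        constructor
        · intro h
          field_simp
          linear_combination h
        · intro h
          rw [h]
          field_simp
          ring
      have hset : (Finset.univ.filter fun x : F => G w.1 w.2 + x * w.2 = 0)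
          = {-G w.1 w.2 * w.2⁻¹} := by
        ext x
        simp only [Finset.mem_filter, Finset.mem_univ, true_and, Finset.mem_singleton]
        exact hiff x
      rw [hset, Finset.card_singleton]
  -- assemble the count of the zero set
  have count0 : (Finset.univ.filter fun m : L => l (phiM F L k m) = 0).card
      = Fintype.card F ^ 2 + Fintype.card F := by
    have step1 : (Finset.univ.filter fun v : F × F × F => l (phiM F L k (E v)) = 0).card
        = (Finset.univ.filter fun m : L => l (phiM F L k m) = 0).card := by
      apply Finset.card_bij (fun v _ => E v)
      · intro v hv
        simp only [Finset.mem_filter, Finset.mem_univ, true_and] at hv ⊢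
        exact hv
      · intro v1 hv1 v2 hv2 h
        exact hEinj h
      · intro m hm
        simp only [Finset.mem_filter, Finset.mem_univ, true_and] at hm
        obtain ⟨v, rfl⟩ := hEbij.2 m
        refine ⟨v, ?_, ?_⟩
        · simp only [Finset.mem_filter, Finset.mem_univ, true_and]
          exact hm
        · rfl
    have step2 : (Finset.univ.filter fun v : F × F × F => l (phiM F L k (E v)) = 0).card
        = ∑ w : F × F, (Finset.univ.filter fun x : F => G w.1 w.2 + x * w.2 = 0).card := by
      rw [Finset.card_eq_sum_card_fiberwise
        (f := fun v : F × F × F => v.2) (t := Finset.univ) (fun _ _ => Finset.mem_univ _)]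
      apply Finset.sum_congr rfl
      intro w _
      refine Finset.card_bij (fun v _ => v.1) ?_ ?_ ?_
      · intro v hv
        simp only [Finset.mem_filter, Finset.mem_univ, true_and] at hv ⊢
        obtain ⟨h1, h2⟩ := hv
        rw [hEl] at h1
        rw [← h2]
        exact h1
      · intro v1 hv1 v2 hv2 h
        simp only [Finset.mem_filter, Finset.mem_univ, true_and] at hv1 hv2
        exact Prod.ext h (hv1.2.trans hv2.2.symm)
      · intro x hx
        simp only [Finset.mem_filter, Finset.mem_univ, true_and] at hx
        refine ⟨(x, w), ?_, ?_⟩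
        · simp only [Finset.mem_filter, Finset.mem_univ, true_and]
          refine ⟨?_, by simp⟩
          rw [hEl]
          exact hx
        · rfl
    have step3 : ∑ w : F × F, (Finset.univ.filter fun x : F => G w.1 w.2 + x * w.2 = 0).card
        = Fintype.card F ^ 2 + Fintype.card F := by
      rw [Finset.sum_congr rfl (fun w _ => hinner w)]
      rw [← Finset.univ_product_univ, Finset.sum_product]
      have hinner2 : ∀ y : F, (∑ z : F, if z = 0 then
          (if y = 0 ∨ y = -1 then Fintype.card F else 0) else 1)
          = (if y = 0 ∨ y = -1 then Fintype.card F else 0) + (Fintype.card F - 1) := by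
        intro y
        rw [Finset.sum_ite, Finset.sum_const, Finset.sum_const]
        rw [show Finset.univ.filter (fun z : F => z = 0) = {0} from by ext z; simp]
        rw [show Finset.univ.filter (fun z : F => ¬z = 0) = Finset.univ.erase 0 from by
          ext z; simp [Finset.mem_erase]]
        rw [Finset.card_erase_of_mem (Finset.mem_univ _)]
        simp [Finset.card_univ]
      rw [Finset.sum_congr rfl (fun y _ => hinner2 y)]
      rw [Finset.sum_add_distrib, Finset.sum_const, Finset.sum_ite, Finset.sum_const,
        Finset.sum_const]
      rw [show Finset.univ.filter (fun y : F => y = 0 ∨ y = -1) = ({0, -1} : Finset F) from by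
        ext y; simp]
      have h01 : (0 : F) ≠ -1 := by
        intro h
        exact one_ne_zero (α := F) (by linear_combination h)
      rw [Finset.card_insert_of_notMem (by simp [h01]), Finset.card_singleton]
      simp only [Finset.card_univ, smul_eq_mul, mul_zero, add_zero]
      have hqpos : 1 ≤ Fintype.card F := Fintype.card_pos
      obtain ⟨r, hr⟩ := Nat.exists_eq_add_of_le hqpos
      obtain ⟨r, hr2⟩ : ∃ r, Fintype.card F = r + 1 := ⟨Fintype.card F - 1, by omega⟩
      rw [hr2, Nat.add_sub_cancel]
      ring
    rw [← step1, step2, step3]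
  have countNe : (Finset.univ.filter fun m : L => ¬ l (phiM F L k m) = 0).card
      = Fintype.card F ^ 3 - (Fintype.card F ^ 2 + Fintype.card F) := by
    have hsplit := Finset.card_filter_add_card_filter_not
      (s := (Finset.univ : Finset L)) (p := fun m : L => l (phiM F L k m) = 0)
    rw [Finset.card_univ, hcardL, count0] at hsplit
    omega
  have hmain : (Finset.univ.filter fun m : L => (k, m) ∈ Sprime F L)
      = (Finset.univ.filter fun m : L => ¬ l (phiM F L k m) = 0) \ {f k, f (f k)} := by
    ext m
    simp only [Finset.mem_filter, Finset.mem_univ, true_and, Finset.mem_sdiff,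
      Finset.mem_insert, Finset.mem_singleton]
    rw [hcrit m]
    tauto
  rw [hmain, Finset.card_sdiff_of_subset]
  · rw [countNe]
    have h2 : ({f k, f (f k)} : Finset L).card = 2 := by
      rw [Finset.card_insert_of_notMem (by simp [hAB]), Finset.card_singleton]
    rw [h2]
  · intro m hm
    simp only [Finset.mem_insert, Finset.mem_singleton] at hm
    simp only [Finset.mem_filter, Finset.mem_univ, true_and]
    rcases hm with rfl | rfl
    · rw [hvA, hlk2]; exact one_ne_zero
    · rw [hvB, hlk2]; exact one_ne_zero

/-- `|𝒮'| = (q³−q)(q³−q²−q−2)`; in particular `𝒮' = ∅` iff `q = 2`. -/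
theorem card_Sprime (F : Type*) [Field F] [Fintype F]
    (L : Type*) [Field L] [Algebra F L] (hL : Module.finrank F L = 3)
    (q : ℕ) (hq : q = Fintype.card F) :
    Nat.card (Sprime F L) = (q ^ 3 - q) * (q ^ 3 - q ^ 2 - q - 2) ∧
      (Sprime F L = ∅ ↔ q = 2) := by
  classical
  subst hq
  haveI : Module.Finite F L := Module.finite_of_finrank_pos (by rw [hL]; norm_num)
  haveI : Finite L := Module.finite_of_finite F
  letI : Fintype L := Fintype.ofFinite L
  have hcardL : Fintype.card L = Fintype.card F ^ 3 := by
    rw [Module.card_eq_pow_finrank (K := F) (V := L), hL]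
  have hq1 : 1 < Fintype.card F := Fintype.one_lt_card
  set T := Finset.univ.filter (fun p : L × L => p ∈ Sprime F L) with hT
  have hfin : (Sprime F L).Finite := Set.toFinite _
  have hncard : Nat.card (Sprime F L) = T.card := by
    rw [Nat.card_coe_set_eq, Set.ncard_eq_toFinset_card _ hfin]
    congr 1
    ext p
    rw [Set.Finite.mem_toFinset, hT, Finset.mem_filter]
    simp [Set.Finite.mem_toFinset, hT, Sprime, Set.mem_setOf_eq]
  have hfiber : ∀ kk : L, (T.filter fun p => p.1 = kk).card
      = if (∃ y : F, algebraMap F L y = kk) then 0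
        else Fintype.card F ^ 3 - (Fintype.card F ^ 2 + Fintype.card F) - 2 := by
    intro kk
    by_cases hkk : ∃ y : F, algebraMap F L y = kk
    · rw [if_pos hkk]
      rw [Finset.card_eq_zero, Finset.filter_eq_empty_iff]
      rintro ⟨k1, m⟩ hp
      simp only [hT, Finset.mem_filter, Finset.mem_univ, true_and] at hp
      intro hfst
      simp only at hfst
      subst hfst
      obtain ⟨y, hy⟩ := hkk
      have hind := hp.1
      rw [Fintype.linearIndependent_iff] at hind
      have h3 := hind ![y, -1, 0] ?_ 1
      · simp at h3
      · rw [Fin.sum_univ_three]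
        simp only [Matrix.cons_val_zero, Matrix.cons_val_one, Matrix.head_cons,
          Matrix.cons_val_two, Matrix.tail_cons]
        rw [zero_smul, add_zero, Algebra.smul_def, hy, Algebra.smul_def,
          _root_.map_neg, _root_.map_one]
        ring
    · rw [if_neg hkk]
      have himg : T.filter (fun p => p.1 = kk)
          = Finset.image (fun m : L => (kk, m))
            (Finset.univ.filter fun m => (kk, m) ∈ Sprime F L) := by
        ext p
        simp only [hT, Finset.mem_filter, Finset.mem_univ, true_and, Finset.mem_image]
        constructor
        · rintro ⟨hp, h1⟩
          refine ⟨p.2, ?_, ?_⟩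
          · rw [show ((kk, p.2) : L × L) = p from by rw [← h1]]
            exact hp
          · rw [← h1]
        · rintro ⟨m, hm, rfl⟩
          exact ⟨hm, rfl⟩
      rw [himg, Finset.card_image_of_injective _ (fun a b h => (Prod.mk.injEq _ _ _ _).mp h |>.2)]
      exact key_count F L hL kk hkk
  have hsum : T.card = ∑ kk : L, (T.filter fun p => p.1 = kk).card :=
    Finset.card_eq_sum_card_fiberwise (fun x _ => Finset.mem_univ _)
  have h1 : (Finset.univ.filter fun kk : L => ∃ y : F, algebraMap F L y = kk).card
      = Fintype.card F := by
    rw [show (Finset.univ.filter fun kk : L => ∃ y : F, algebraMap F L y = kk)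
        = Finset.univ.image (algebraMap F L) from by ext x; simp [eq_comm]]
    rw [Finset.card_image_of_injective _ (algebraMap F L).injective, Finset.card_univ]
  have h2 : (Finset.univ.filter fun kk : L => ¬∃ y : F, algebraMap F L y = kk).card
      = Fintype.card F ^ 3 - Fintype.card F := by
    have hsplit := Finset.card_filter_add_card_filter_not
      (s := (Finset.univ : Finset L)) (p := fun kk : L => ∃ y : F, algebraMap F L y = kk)
    rw [Finset.card_univ, hcardL, h1] at hsplit
    omega
  have hcount : T.card = (Fintype.card F ^ 3 - Fintype.card F)
      * (Fintype.card F ^ 3 - (Fintype.card F ^ 2 + Fintype.card F) - 2) := by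
    rw [hsum, Finset.sum_congr rfl (fun kk _ => hfiber kk), Finset.sum_ite,
      Finset.sum_const, Finset.sum_const, h2]
    simp [smul_eq_mul]
  have harith : Fintype.card F ^ 3 - (Fintype.card F ^ 2 + Fintype.card F) - 2
      = Fintype.card F ^ 3 - Fintype.card F ^ 2 - Fintype.card F - 2 := by
    rw [Nat.sub_sub, Nat.sub_sub, Nat.sub_sub, add_assoc]
  have hform : Nat.card (Sprime F L) = (Fintype.card F ^ 3 - Fintype.card F)
      * (Fintype.card F ^ 3 - Fintype.card F ^ 2 - Fintype.card F - 2) := by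
    rw [hncard, hcount, harith]
  refine ⟨hform, ?_⟩
  constructor
  · intro hempty
    have h0 : Nat.card (Sprime F L) = 0 := by
      rw [hempty]
      simp
    rw [hform] at h0
    have hqq := hq1
    rcases Nat.mul_eq_zero.mp h0 with h | h
    · exfalso
      have hq2 : 2 ≤ Fintype.card F := hq1
      have e3 : Fintype.card F ^ 3 = Fintype.card F * (Fintype.card F * Fintype.card F) := by
        ring
      have h4 : 2 * 2 ≤ Fintype.card F * Fintype.card F := Nat.mul_le_mul hq2 hq2
      have h5 : 2 * 2 * Fintype.card F
          ≤ Fintype.card F * Fintype.card F * Fintype.card F := Nat.mul_le_mul_right _ h4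
      have e4 : Fintype.card F * Fintype.card F * Fintype.card F
          = Fintype.card F * (Fintype.card F * Fintype.card F) := by ring
      omega
    · by_contra hne
      have hq3 : 3 ≤ Fintype.card F := by omega
      have e2 : Fintype.card F ^ 2 = Fintype.card F * Fintype.card F := by ring
      have e3 : Fintype.card F ^ 3 = Fintype.card F * (Fintype.card F * Fintype.card F) := by
        ring
      have h6 : 3 * Fintype.card F ≤ Fintype.card F * Fintype.card F :=
        Nat.mul_le_mul_right _ hq3
      have h7 : 3 * (Fintype.card F * Fintype.card F)
          ≤ Fintype.card F * (Fintype.card F * Fintype.card F) :=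
        Nat.mul_le_mul_right _ hq3
      omega
  · intro h2eq
    have h0 : Nat.card (Sprime F L) = 0 := by
      rw [hform, h2eq]
      norm_num
    have : IsEmpty (Sprime F L) := by
      rcases Nat.card_eq_zero.mp h0 with h | h
      · exact h
      · exact absurd h (not_infinite_iff_finite.mpr (Set.toFinite _).to_subtype)
    exact Set.isEmpty_coe_sort.mp this
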